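/- Let D be a locally nilpotent ℂ-derivation of ℂ[X_1,…,X_n] that is homogeneous of nonzero degree k with respect to integer weights w = (w_1,…,w_n). Let F be the ℂ-algebra automorphism exp(D), i.e. the automorphism satisfying F(p) = Σ_{i=0}^{m−1} (1/i!)·D^i(p) for every polynomial p and every m with D^m(p) = 0, and let Λ be the linear automorphism determined by Λ(X_i) = e^{w_i}·X_i. Then Λ∘F is linearizable: there exists a ℂ-algebra automorphism G of ℂ[X_1,…,X_n] such that G^{−1}∘(Λ∘F)∘G = Λ. -/

import Mathlib

open MvPolynomial Finset


section Aux
variable {A : Type*} [CommRing A] [Algebra ℂ A] (D : Derivation ℂ A A)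

theorem tri_aux {M : Type*} [AddCommMonoid M] (f : ℕ → ℕ → M) (m : ℕ) :
    ∑ t ∈ range m, ∑ i ∈ range (t + 1), f i (t - i)
      = ∑ i ∈ range m, ∑ j ∈ range (m - i), f i j := by
  induction m with
  | zero => simp
  | succ m ih =>
    rw [Finset.sum_range_succ, ih, Finset.sum_range_succ (fun i => ∑ j ∈ range (m + 1 - i), f i j)]
    have h1 : ∀ i ∈ range m, ∑ j ∈ range (m + 1 - i), f i j
        = (∑ j ∈ range (m - i), f i j) + f i (m - i) := by
      intro i hi
      rw [mem_range] at hi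
      rw [show m + 1 - i = (m - i) + 1 by omega, Finset.sum_range_succ]
    rw [Finset.sum_congr rfl h1, Finset.sum_add_distrib, Finset.sum_range_succ (fun i => f i (m - i))]
    simp [add_assoc]

theorem square_aux {M : Type*} [AddCommMonoid M] (f : ℕ → ℕ → M) (m : ℕ)
    (hf : ∀ i j, m ≤ i + j → f i j = 0) :
    ∑ i ∈ range m, ∑ j ∈ range (m - i), f i j = ∑ i ∈ range m, ∑ j ∈ range m, f i j := by
  refine Finset.sum_congr rfl fun i hi => ?_
  rw [mem_range] at hi
  refine Finset.sum_subset (Finset.range_subset_range.2 (by omega)) fun j _ hj => ?_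
  simp only [mem_range, not_lt] at hj
  exact hf i j (by omega)

theorem iter_leibniz (m : ℕ) (p q : A) :
    (D.toLinearMap ^ m) (p * q)
      = ∑ i ∈ range (m + 1), (m.choose i : ℂ) •
          ((D.toLinearMap ^ i) p * (D.toLinearMap ^ (m - i)) q) := by
  induction m with
  | zero => simp
  | succ m ih =>
    have hDs : ∀ (j : ℕ) (x : A), (D.toLinearMap ^ (j + 1)) x = D ((D.toLinearMap ^ j) x) := by
      intro j x; rw [pow_succ']; rfl
    rw [hDs, ih, map_sum]
    have step : ∀ i ∈ range (m + 1),
        D ((m.choose i : ℂ) • ((D.toLinearMap ^ i) p * (D.toLinearMap ^ (m - i)) q))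
          = (m.choose i : ℂ) • ((D.toLinearMap ^ (i + 1)) p * (D.toLinearMap ^ (m - i)) q)
            + (m.choose i : ℂ) • ((D.toLinearMap ^ i) p * (D.toLinearMap ^ (m - i + 1)) q) := by
      intro i _
      rw [Derivation.map_smul, Derivation.leibniz, smul_eq_mul, smul_eq_mul, smul_add,
        hDs, hDs]
      ring_nf
    rw [Finset.sum_congr rfl step, Finset.sum_add_distrib,
      Finset.sum_range_succ' (fun i => (((m + 1).choose i : ℕ) : ℂ) •
        ((D.toLinearMap ^ i) p * (D.toLinearMap ^ (m + 1 - i)) q)) (m + 1)]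
    have e1 : ∀ i ∈ range (m + 1),
        (((m + 1).choose (i + 1) : ℕ) : ℂ) •
          ((D.toLinearMap ^ (i + 1)) p * (D.toLinearMap ^ (m + 1 - (i + 1))) q)
        = (m.choose i : ℂ) • ((D.toLinearMap ^ (i + 1)) p * (D.toLinearMap ^ (m - i)) q)
          + (m.choose (i + 1) : ℂ) • ((D.toLinearMap ^ (i + 1)) p * (D.toLinearMap ^ (m - i)) q) := by
      intro i _
      rw [Nat.succ_sub_succ, Nat.choose_succ_succ]
      push_cast
      rw [add_smul]
    rw [Finset.sum_congr rfl e1, Finset.sum_add_distrib]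
    have e2 : ∑ i ∈ range (m + 1), (m.choose i : ℂ) •
          ((D.toLinearMap ^ i) p * (D.toLinearMap ^ (m - i + 1)) q)
        = (∑ i ∈ range (m + 1), (m.choose (i + 1) : ℂ) •
            ((D.toLinearMap ^ (i + 1)) p * (D.toLinearMap ^ (m - i)) q))
          + (((m + 1).choose 0 : ℕ) : ℂ) • ((D.toLinearMap ^ 0) p * (D.toLinearMap ^ (m + 1 - 0)) q) := by
      rw [Finset.sum_range_succ' (fun i => (m.choose i : ℂ) •
            ((D.toLinearMap ^ i) p * (D.toLinearMap ^ (m - i + 1)) q)) m,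
          Finset.sum_range_succ (fun i => (m.choose (i + 1) : ℂ) •
            ((D.toLinearMap ^ (i + 1)) p * (D.toLinearMap ^ (m - i)) q)) m]
      simp only [Nat.choose_succ_self, Nat.cast_zero, zero_smul, add_zero, Nat.choose_zero_right,
        Nat.cast_one, one_smul, Nat.sub_zero, pow_zero, Nat.sub_self]
      congr 1
      refine Finset.sum_congr rfl fun i hi => ?_
      rw [mem_range] at hi
      rw [show m - (i + 1) + 1 = m - i by omega]
    rw [e2]
    abel

end Aux

section Exp
variable {A : Type*} [CommRing A] [Algebra ℂ A] (D : Derivation ℂ A A)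

theorem pow_zero_of_le {p : A} {m i : ℕ} (hm : (D.toLinearMap ^ m) p = 0) (h : m ≤ i) :
    (D.toLinearMap ^ i) p = 0 := by
  rw [show i = (i - m) + m by omega, pow_add, Module.End.mul_apply, hm, map_zero]

noncomputable def expD (c : ℂ) (p : A) : A :=
  ∑ᶠ i : ℕ, (c ^ i / (i.factorial : ℂ)) • (D.toLinearMap ^ i) p

theorem expD_eq (c : ℂ) {p : A} {m : ℕ} (hm : (D.toLinearMap ^ m) p = 0) :
    expD D c p = ∑ i ∈ range m, (c ^ i / (i.factorial : ℂ)) • (D.toLinearMap ^ i) p := by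
  apply finsum_eq_finset_sum_of_support_subset
  intro i hi
  simp only [Function.mem_support, ne_eq] at hi
  by_contra hmem
  simp only [coe_range, Set.mem_Iio, not_lt] at hmem
  exact hi (by rw [pow_zero_of_le D hm hmem, smul_zero])

theorem scal_aux (c c' : ℂ) {i t : ℕ} (h : i ≤ t) :
    c ^ i * c' ^ (t - i) * (t.choose i : ℂ) / (t.factorial : ℂ)
      = (c ^ i / (i.factorial : ℂ)) * (c' ^ (t - i) / ((t - i).factorial : ℂ)) := by
  rw [Nat.cast_choose ℂ h]
  have h1 : (t.factorial : ℂ) ≠ 0 := Nat.cast_ne_zero.2 t.factorial_ne_zero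
  have h2 : (i.factorial : ℂ) ≠ 0 := Nat.cast_ne_zero.2 i.factorial_ne_zero
  have h3 : ((t - i).factorial : ℂ) ≠ 0 := Nat.cast_ne_zero.2 (t - i).factorial_ne_zero
  field_simp

theorem expD_add (hln : ∀ p : A, ∃ m, (D.toLinearMap ^ m) p = 0) (c : ℂ) (p q : A) :
    expD D c (p + q) = expD D c p + expD D c q := by
  obtain ⟨m1, h1⟩ := hln p
  obtain ⟨m2, h2⟩ := hln q
  have hp : (D.toLinearMap ^ (max m1 m2)) p = 0 := pow_zero_of_le D h1 (le_max_left _ _)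
  have hq : (D.toLinearMap ^ (max m1 m2)) q = 0 := pow_zero_of_le D h2 (le_max_right _ _)
  have hpq : (D.toLinearMap ^ (max m1 m2)) (p + q) = 0 := by rw [map_add, hp, hq, add_zero]
  rw [expD_eq D c hpq, expD_eq D c hp, expD_eq D c hq, ← Finset.sum_add_distrib]
  exact Finset.sum_congr rfl fun i _ => by rw [map_add, smul_add]

theorem expD_smul (hln : ∀ p : A, ∃ m, (D.toLinearMap ^ m) p = 0) (c a : ℂ) (p : A) :
    expD D c (a • p) = a • expD D c p := by
  obtain ⟨m, hm⟩ := hln p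
  have hap : (D.toLinearMap ^ m) (a • p) = 0 := by rw [map_smul, hm, smul_zero]
  rw [expD_eq D c hap, expD_eq D c hm, Finset.smul_sum]
  exact Finset.sum_congr rfl fun i _ => by rw [map_smul, smul_comm]

theorem expD_mul (hln : ∀ p : A, ∃ m, (D.toLinearMap ^ m) p = 0) (c : ℂ) (p q : A) :
    expD D c (p * q) = expD D c p * expD D c q := by
  obtain ⟨m1, h1⟩ := hln p
  obtain ⟨m2, h2⟩ := hln q
  set N := m1 + m2 with hN
  have hp : ∀ i, m1 ≤ i → (D.toLinearMap ^ i) p = 0 := fun i hi => pow_zero_of_le D h1 hi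
  have hq : ∀ i, m2 ≤ i → (D.toLinearMap ^ i) q = 0 := fun i hi => pow_zero_of_le D h2 hi
  have hpq : (D.toLinearMap ^ N) (p * q) = 0 := by
    rw [iter_leibniz]
    refine Finset.sum_eq_zero fun i hi => ?_
    rw [mem_range] at hi
    rcases le_or_gt m1 i with h | h
    · rw [hp i h, zero_mul, smul_zero]
    · rw [hq (N - i) (by omega), mul_zero, smul_zero]
  have key : expD D c (p * q)
      = ∑ i ∈ range N, ∑ j ∈ range N,
          ((c ^ i / (i.factorial : ℂ)) • (D.toLinearMap ^ i) p)
            * ((c ^ j / (j.factorial : ℂ)) • (D.toLinearMap ^ j) q) := by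
    rw [expD_eq D c hpq]
    rw [← square_aux _ N (fun i j hij => by
      rcases le_or_gt m1 i with h | h
      · rw [hp i h, smul_zero, zero_mul]
      · rw [hq j (by omega), smul_zero, mul_zero])]
    rw [← tri_aux]
    refine Finset.sum_congr rfl fun t _ => ?_
    rw [iter_leibniz, Finset.smul_sum]
    refine Finset.sum_congr rfl fun i hi => ?_
    rw [mem_range, Nat.lt_succ_iff] at hi
    rw [smul_smul, smul_mul_smul_comm, ← scal_aux c c hi]
    congr 1
    have : c ^ i * c ^ (t - i) = c ^ t := by rw [← pow_add]; congr 1; omega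
    rw [this, div_mul_eq_mul_div]
  rw [key, ← Finset.sum_mul_sum,
    ← expD_eq D c (pow_zero_of_le D h1 (by omega : m1 ≤ N)),
    ← expD_eq D c (pow_zero_of_le D h2 (by omega : m2 ≤ N))]

end Exp

section Exp2
variable {A : Type*} [CommRing A] [Algebra ℂ A] (D : Derivation ℂ A A)

theorem expD_comp (hln : ∀ p : A, ∃ m, (D.toLinearMap ^ m) p = 0) (c c' : ℂ) (p : A) :
    expD D c (expD D c' p) = expD D (c + c') p := by
  obtain ⟨m, hm⟩ := hln p
  have hpow : ∀ i j : ℕ, (D.toLinearMap ^ j) ((D.toLinearMap ^ i) p)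
      = (D.toLinearMap ^ (j + i)) p := by
    intro i j; rw [pow_add, Module.End.mul_apply]
  have h0 : ∀ i j : ℕ, m ≤ i + j → (D.toLinearMap ^ (i + j)) p = 0 :=
    fun i j h => pow_zero_of_le D hm h
  have hme : (D.toLinearMap ^ m) (expD D c' p) = 0 := by
    rw [expD_eq D c' hm, map_sum]
    refine Finset.sum_eq_zero fun i _ => ?_
    rw [map_smul, hpow, pow_zero_of_le D hm (by omega), smul_zero]
  have lhs : expD D c (expD D c' p)
      = ∑ j ∈ range m, ∑ i ∈ range m,
          ((c ^ j / (j.factorial : ℂ)) * (c' ^ i / (i.factorial : ℂ)))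
            • (D.toLinearMap ^ (j + i)) p := by
    rw [expD_eq D c hme]
    refine Finset.sum_congr rfl fun j _ => ?_
    rw [expD_eq D c' hm, map_sum, Finset.smul_sum]
    refine Finset.sum_congr rfl fun i _ => ?_
    rw [map_smul, hpow, smul_smul]
  rw [lhs, expD_eq D (c + c') hm]
  have rhs : ∑ t ∈ range m, ((c + c') ^ t / (t.factorial : ℂ)) • (D.toLinearMap ^ t) p
      = ∑ t ∈ range m, ∑ i ∈ range (t + 1),
          ((c ^ i / (i.factorial : ℂ)) * (c' ^ (t - i) / ((t - i).factorial : ℂ)))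
            • (D.toLinearMap ^ (i + (t - i))) p := by
    refine Finset.sum_congr rfl fun t _ => ?_
    rw [add_pow, Finset.sum_div, Finset.sum_smul]
    refine Finset.sum_congr rfl fun i hi => ?_
    rw [mem_range, Nat.lt_succ_iff] at hi
    rw [← scal_aux c c' hi, show i + (t - i) = t by omega]
  rw [rhs]
  rw [show (fun t => ∑ i ∈ range (t + 1),
      ((c ^ i / (i.factorial : ℂ)) * (c' ^ (t - i) / ((t - i).factorial : ℂ)))
        • (D.toLinearMap ^ (i + (t - i))) p) = fun t => ∑ i ∈ range (t + 1),
      (fun i j => ((c ^ i / (i.factorial : ℂ)) * (c' ^ j / (j.factorial : ℂ)))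
        • (D.toLinearMap ^ (i + j)) p) i (t - i) from rfl]
  rw [tri_aux (fun i j => ((c ^ i / (i.factorial : ℂ)) * (c' ^ j / (j.factorial : ℂ)))
        • (D.toLinearMap ^ (i + j)) p) m]
  rw [square_aux _ m (fun i j hij => by rw [h0 i j hij, smul_zero])]

theorem expD_zeroc (hln : ∀ p : A, ∃ m, (D.toLinearMap ^ m) p = 0) (p : A) :
    expD D 0 p = p := by
  obtain ⟨m, hm⟩ := hln p
  have hm1 : (D.toLinearMap ^ (m + 1)) p = 0 := pow_zero_of_le D hm (by omega)
  rw [expD_eq D 0 hm1, Finset.sum_eq_single_of_mem 0 (mem_range.2 (by omega))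
    (fun i _ hi => by rw [zero_pow hi, zero_div, zero_smul])]
  simp

theorem expD_algebraMap (c : ℂ) (a : ℂ) :
    expD D c (algebraMap ℂ A a) = algebraMap ℂ A a := by
  have h1 : (D.toLinearMap ^ 1) (algebraMap ℂ A a) = 0 := by
    rw [pow_one]; exact D.map_algebraMap a
  rw [expD_eq D c h1]
  simp

noncomputable def expAlg (hln : ∀ p : A, ∃ m, (D.toLinearMap ^ m) p = 0) (c : ℂ) :
    A →ₐ[ℂ] A where
  toFun := expD D c
  map_one' := by
    have := expD_algebraMap D c 1
    simpa using this
  map_mul' := expD_mul D hln c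
  map_zero' := by
    show expD D c 0 = 0
    have : (D.toLinearMap ^ 0) (0 : A) = 0 := by simp
    rw [expD_eq D c this]; simp
  map_add' := expD_add D hln c
  commutes' := expD_algebraMap D c

noncomputable def expEquiv (hln : ∀ p : A, ∃ m, (D.toLinearMap ^ m) p = 0) (c : ℂ) :
    A ≃ₐ[ℂ] A :=
  AlgEquiv.ofAlgHom (expAlg D hln c) (expAlg D hln (-c))
    (AlgHom.ext fun p => by
      show expD D c (expD D (-c) p) = p
      rw [expD_comp D hln, add_neg_cancel, expD_zeroc D hln])
    (AlgHom.ext fun p => by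
      show expD D (-c) (expD D c p) = p
      rw [expD_comp D hln, neg_add_cancel, expD_zeroc D hln])

theorem expEquiv_apply (hln : ∀ p : A, ∃ m, (D.toLinearMap ^ m) p = 0) (c : ℂ) (p : A) :
    expEquiv D hln c p = expD D c p := rfl

theorem expEquiv_symm_apply (hln : ∀ p : A, ∃ m, (D.toLinearMap ^ m) p = 0) (c : ℂ) (p : A) :
    (expEquiv D hln c).symm p = expD D (-c) p := rfl

end Exp2

section Main
open MvPolynomial
variable {n : ℕ} (w : Fin n → ℤ)

theorem my_prod_smul {ι β α : Type*} [CommMonoid β] [CommMonoid α] [MulAction α β]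
    [IsScalarTower α β β] [SMulCommClass α β β] (s : Finset ι) (b : ι → α) (f : ι → β) :
    ∏ i ∈ s, b i • f i = (∏ i ∈ s, b i) • ∏ i ∈ s, f i := by
  induction s using Finset.cons_induction_on with
  | empty => simp
  | cons _ _ hj ih => rw [Finset.prod_cons, ih, smul_mul_smul_comm, ← Finset.prod_cons hj,
      ← Finset.prod_cons hj]

theorem lam_monomial (Λ : MvPolynomial (Fin n) ℂ ≃ₐ[ℂ] MvPolynomial (Fin n) ℂ)
    (hΛ : ∀ i, Λ (X i) = Complex.exp ((w i : ℂ)) • X i) (v : Fin n →₀ ℕ) (a : ℂ) :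
    Λ (monomial v a) = Complex.exp ((Finsupp.weight w v : ℤ) : ℂ) • monomial v a := by
  rw [monomial_eq]
  rw [map_mul]
  have hC : Λ (C a) = C a := by
    rw [show (C a : MvPolynomial (Fin n) ℂ) = algebraMap ℂ _ a from rfl, AlgEquiv.commutes]
  rw [hC, Finsupp.prod, map_prod]
  have hterm : ∀ i ∈ v.support, Λ (X i ^ v i)
      = Complex.exp (((v i * w i : ℤ) : ℂ)) • (X i ^ v i : MvPolynomial (Fin n) ℂ) := by
    intro i _
    rw [map_pow, hΛ i, smul_pow, ← Complex.exp_nat_mul]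
    push_cast
    ring_nf
  rw [Finset.prod_congr rfl hterm,
    my_prod_smul v.support (fun i => Complex.exp (((v i * w i : ℤ) : ℂ)))
      (fun i => (X i ^ v i : MvPolynomial (Fin n) ℂ))]
  rw [← Complex.exp_sum]
  have hsum : ∑ i ∈ v.support, ((v i * w i : ℤ) : ℂ) = ((Finsupp.weight w v : ℤ) : ℂ) := by
    rw [Finsupp.weight_apply, Finsupp.sum]
    push_cast [nsmul_eq_mul]
    ring
  rw [hsum, mul_smul_comm]

theorem lam_homog (Λ : MvPolynomial (Fin n) ℂ ≃ₐ[ℂ] MvPolynomial (Fin n) ℂ)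
    (hΛ : ∀ i, Λ (X i) = Complex.exp ((w i : ℂ)) • X i) {p : MvPolynomial (Fin n) ℂ} {d : ℤ}
    (hp : IsWeightedHomogeneous w p d) : Λ p = Complex.exp ((d : ℂ)) • p := by
  conv_lhs => rw [p.as_sum]
  rw [map_sum]
  conv_rhs => rw [p.as_sum]
  rw [Finset.smul_sum]
  refine Finset.sum_congr rfl fun v hv => ?_
  rw [lam_monomial w Λ hΛ, hp (mem_support_iff.1 hv)]

end Main

section Main2
open MvPolynomial
variable {n : ℕ} (w : Fin n → ℤ) (k : ℤ)
variable (D : Derivation ℂ (MvPolynomial (Fin n) ℂ) (MvPolynomial (Fin n) ℂ))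
variable (Λ : MvPolynomial (Fin n) ℂ ≃ₐ[ℂ] MvPolynomial (Fin n) ℂ)

theorem pow_iter (i : ℕ) (p : MvPolynomial (Fin n) ℂ) :
    (D.toLinearMap ^ i) p = (⇑D)^[i] p := by
  rw [Module.End.pow_apply]; rfl

theorem commD
    (hD : ∀ (d : ℤ) (p : MvPolynomial (Fin n) ℂ), IsWeightedHomogeneous w p d →
      D p = 0 ∨ IsWeightedHomogeneous w (D p) (d + k))
    (hΛ : ∀ i, Λ (X i) = Complex.exp ((w i : ℂ)) • X i) (p : MvPolynomial (Fin n) ℂ) :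
    Λ (D p) = Complex.exp ((k : ℂ)) • D (Λ p) := by
  conv_lhs => rw [p.as_sum]
  conv_rhs => rw [p.as_sum]
  rw [map_sum, map_sum, map_sum, map_sum, Finset.smul_sum]
  refine Finset.sum_congr rfl fun v hv => ?_
  set q : MvPolynomial (Fin n) ℂ := monomial v (coeff v p) with hqdef
  set d : ℤ := Finsupp.weight w v with hddef
  have hq : IsWeightedHomogeneous w q d := isWeightedHomogeneous_monomial w v _ rfl
  have hΛq : Λ q = Complex.exp ((d : ℂ)) • q := lam_homog w Λ hΛ hq
  rcases hD d q hq with h0 | hh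
  · rw [h0, map_zero, hΛq, Derivation.map_smul, h0, smul_zero, smul_zero]
  · rw [lam_homog w Λ hΛ hh, hΛq, Derivation.map_smul, smul_smul, ← Complex.exp_add]
    congr 1
    push_cast
    ring

theorem commD_pow
    (hD : ∀ (d : ℤ) (p : MvPolynomial (Fin n) ℂ), IsWeightedHomogeneous w p d →
      D p = 0 ∨ IsWeightedHomogeneous w (D p) (d + k))
    (hΛ : ∀ i, Λ (X i) = Complex.exp ((w i : ℂ)) • X i) (i : ℕ) (p : MvPolynomial (Fin n) ℂ) :
    Λ ((D.toLinearMap ^ i) p)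
      = (Complex.exp ((k : ℂ))) ^ i • (D.toLinearMap ^ i) (Λ p) := by
  induction i with
  | zero => simp
  | succ i ih =>
    have hDs : ∀ x : MvPolynomial (Fin n) ℂ,
        (D.toLinearMap ^ (i + 1)) x = D ((D.toLinearMap ^ i) x) := by
      intro x; rw [pow_succ']; rfl
    rw [hDs, commD w k D Λ hD hΛ, ih, Derivation.map_smul, hDs, smul_smul, pow_succ]
    rw [mul_comm]

theorem conjLam (hln' : ∀ p : MvPolynomial (Fin n) ℂ, ∃ m, (D.toLinearMap ^ m) p = 0)
    (hD : ∀ (d : ℤ) (p : MvPolynomial (Fin n) ℂ), IsWeightedHomogeneous w p d →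
      D p = 0 ∨ IsWeightedHomogeneous w (D p) (d + k))
    (hΛ : ∀ i, Λ (X i) = Complex.exp ((w i : ℂ)) • X i) (c : ℂ) (p : MvPolynomial (Fin n) ℂ) :
    Λ (expD D c p) = expD D (c * Complex.exp ((k : ℂ))) (Λ p) := by
  obtain ⟨m, hm⟩ := hln' p
  have hΛm : (D.toLinearMap ^ m) (Λ p) = 0 := by
    have h := commD_pow w k D Λ hD hΛ m p
    rw [hm, map_zero] at h
    exact ((smul_eq_zero.1 h.symm).resolve_left
      (pow_ne_zero _ (Complex.exp_ne_zero _)))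
  rw [expD_eq D c hm, map_sum, expD_eq D _ hΛm]
  refine Finset.sum_congr rfl fun i _ => ?_
  rw [map_smul, commD_pow w k D Λ hD hΛ, smul_smul, mul_pow]
  congr 1
  ring

end Main2


/-- If `D` is a locally nilpotent derivation of `ℂ[X_1,…,X_n]` homogeneous of nonzero
degree `k` for integer weights `w`, `F = exp(D)` and `Λ(X_i) = e^{w_i} • X_i`, then `Λ ∘ F`
is linearizable: `G⁻¹ ∘ (Λ ∘ F) ∘ G = Λ` for some automorphism `G`. -/
theorem nagata_stmt_4 (n : ℕ) (w : Fin n → ℤ) (k : ℤ) (hk : k ≠ 0)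
    (D : Derivation ℂ (MvPolynomial (Fin n) ℂ) (MvPolynomial (Fin n) ℂ))
    (hln : ∀ p : MvPolynomial (Fin n) ℂ, ∃ m : ℕ, (⇑D)^[m] p = 0)
    (hD : ∀ (d : ℤ) (p : MvPolynomial (Fin n) ℂ),
      IsWeightedHomogeneous w p d →
      D p = 0 ∨ IsWeightedHomogeneous w (D p) (d + k))
    (F : MvPolynomial (Fin n) ℂ ≃ₐ[ℂ] MvPolynomial (Fin n) ℂ)
    (hF : ∀ (p : MvPolynomial (Fin n) ℂ) (m : ℕ), (⇑D)^[m] p = 0 →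
      F p = ∑ i ∈ Finset.range m, ((Nat.factorial i : ℂ))⁻¹ • (⇑D)^[i] p)
    (Λ : MvPolynomial (Fin n) ℂ ≃ₐ[ℂ] MvPolynomial (Fin n) ℂ)
    (hΛ : ∀ i, Λ (X i) = Complex.exp ((w i : ℂ)) • X i) :
    ∃ G : MvPolynomial (Fin n) ℂ ≃ₐ[ℂ] MvPolynomial (Fin n) ℂ,
      ∀ p, G.symm (Λ (F (G p))) = Λ p := by
  have hln' : ∀ p : MvPolynomial (Fin n) ℂ, ∃ m, (D.toLinearMap ^ m) p = 0 := by
    intro p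
    obtain ⟨m, hm⟩ := hln p
    exact ⟨m, by rw [pow_iter]; exact hm⟩
  -- `F` agrees with `expD D 1`
  have hFe : ∀ p, F p = expD D 1 p := by
    intro p
    obtain ⟨m, hm⟩ := hln p
    rw [hF p m hm, expD_eq D 1 (by rw [pow_iter]; exact hm)]
    refine Finset.sum_congr rfl fun i _ => ?_
    rw [one_pow, pow_iter]
    congr 1
    rw [one_div]
  -- `exp k ≠ 1`
  have he1 : Complex.exp ((k : ℂ)) ≠ 1 := by
    intro h
    rw [show ((k : ℤ) : ℂ) = ((k : ℝ) : ℂ) by push_cast; ring, ← Complex.ofReal_exp] at h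
    norm_cast at h
    rw [Real.exp_eq_one_iff] at h
    exact hk (by exact_mod_cast h)
  set e : ℂ := Complex.exp ((k : ℂ)) with hedef
  have hne : (1 : ℂ) - e ≠ 0 := sub_ne_zero_of_ne (Ne.symm he1)
  set c : ℂ := e / (1 - e) with hcdef
  have hc : (1 + c) * e = c := by
    rw [hcdef]
    field_simp
    ring
  refine ⟨expEquiv D hln' c, fun p => ?_⟩
  rw [expEquiv_apply, expEquiv_symm_apply, hFe,
    expD_comp D hln' 1 c, conjLam w k D Λ hln' hD hΛ]
  rw [← hedef, show (1 + c) * e = c from hc]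
  rw [expD_comp D hln' (-c) c, neg_add_cancel, expD_zeroc D hln']
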